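/- For 0 < q < 1, the 2×2 matrix G = ((1 + √(1−q²))/(2√(1−q²)))·(I + g⃗·σ⃗) with g⃗ = −((1 − √(1−q²))/q)·n⃗ satisfies G ⪰ |m_j⟩⟨m_j| for j = 1,2, where |m_j⟩⟨m_j| = (I + (−1)^{j+1} m⃗·σ⃗)/2, and G ⪰ w·I with w = (1 + √((1−q)/(1+q)))/2. -/

import Mathlib

open Matrix BigOperators
open scoped ComplexOrder

noncomputable def σx : Matrix (Fin 2) (Fin 2) ℂ := !![0, 1; 1, 0]
noncomputable def σy : Matrix (Fin 2) (Fin 2) ℂ := !![0, -Complex.I; Complex.I, 0]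
noncomputable def σz : Matrix (Fin 2) (Fin 2) ℂ := !![1, 0; 0, -1]

/-- `a⃗·σ⃗` for a real Bloch vector `a⃗ ∈ ℝ³`. -/
noncomputable def pauli (a : Fin 3 → ℝ) : Matrix (Fin 2) (Fin 2) ℂ :=
  a 0 • σx + a 1 • σy + a 2 • σz

set_option maxHeartbeats 1000000 in
lemma pauli_psd (a : ℝ) (b : Fin 3 → ℝ) (ha : 0 ≤ a)
    (h : b 0 ^ 2 + b 1 ^ 2 + b 2 ^ 2 ≤ a ^ 2) :
    (a • (1 : Matrix (Fin 2) (Fin 2) ℂ) + pauli b).PosSemidef := by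
  have hM : a • (1 : Matrix (Fin 2) (Fin 2) ℂ) + pauli b =
      !![(a : ℂ) + b 2, (b 0 : ℂ) - b 1 * Complex.I;
         (b 0 : ℂ) + b 1 * Complex.I, (a : ℂ) - b 2] := by
    ext i j
    fin_cases i <;> fin_cases j <;>
      simp [pauli, σx, σy, σz, Matrix.one_apply] <;> ring
  rw [hM, Matrix.posSemidef_iff_dotProduct_mulVec]
  constructor
  · ext i j
    fin_cases i <;> fin_cases j <;>
      simp [Matrix.conjTranspose_apply, Complex.ext_iff]
  · intro x
    set p := (x 0).re with hp
    set qq := (x 0).im with hq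
    set r := (x 1).re with hr
    set s := (x 1).im with hs
    have key : star x ⬝ᵥ ((!![(a : ℂ) + b 2, (b 0 : ℂ) - b 1 * Complex.I;
         (b 0 : ℂ) + b 1 * Complex.I, (a : ℂ) - b 2]) *ᵥ x) =
        ((a * (p^2+qq^2+r^2+s^2) + b 2 * (p^2+qq^2-r^2-s^2)
          + 2 * b 0 * (p*r+qq*s) + 2 * b 1 * (p*s-qq*r) : ℝ) : ℂ) := by
      simp only [Matrix.mulVec, dotProduct, Fin.sum_univ_two,
        Matrix.cons_val', Matrix.cons_val_zero, Matrix.cons_val_one, Matrix.head_cons,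
        Matrix.empty_val', Matrix.cons_val_fin_one, Matrix.head_fin_const,
        Pi.star_apply, RCLike.star_def]
      apply Complex.ext <;>
        simp [Complex.add_re, Complex.mul_re, Complex.add_im, Complex.mul_im,
          Complex.conj_re, Complex.conj_im, ← Complex.ofReal_pow, Complex.ofReal_re,
          Complex.ofReal_im, ← hp, ← hq, ← hr, ← hs] <;> ring
    rw [key]
    rw [Complex.zero_le_real]
    have hcs : (b 0 * (2*(p*r+qq*s)) + b 1 * (2*(p*s-qq*r))
        + b 2 * (p^2+qq^2-r^2-s^2)) ^ 2
        ≤ (b 0 ^ 2 + b 1 ^ 2 + b 2 ^ 2) * ((p^2+qq^2+r^2+s^2)) ^ 2 := by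
      nlinarith [sq_nonneg (b 0 * (2*(p*s-qq*r)) - b 1 * (2*(p*r+qq*s))),
        sq_nonneg (b 0 * (p^2+qq^2-r^2-s^2) - b 2 * (2*(p*r+qq*s))),
        sq_nonneg (b 1 * (p^2+qq^2-r^2-s^2) - b 2 * (2*(p*s-qq*r))),
        sq_nonneg (p*r+qq*s), sq_nonneg (p*s-qq*r)]
    nlinarith [mul_nonneg ha (add_nonneg (add_nonneg (add_nonneg (sq_nonneg p) (sq_nonneg qq)) (sq_nonneg r)) (sq_nonneg s)), hcs,
      sq_nonneg (a*(p^2+qq^2+r^2+s^2) + (b 0 * (2*(p*r+qq*s)) + b 1 * (2*(p*s-qq*r)) + b 2 * (p^2+qq^2-r^2-s^2))),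
      mul_nonneg ha (sq_nonneg p), mul_nonneg ha (sq_nonneg qq),
      mul_nonneg ha (sq_nonneg r), mul_nonneg ha (sq_nonneg s),
      mul_le_mul_of_nonneg_right h (sq_nonneg (p^2+qq^2+r^2+s^2))]

set_option maxHeartbeats 1000000 in

set_option maxHeartbeats 1000000 in
/-- the FRIO dual variable `G` dominates both measurement projectors and
`w·I`, for `0 < q < 1`. -/
theorem qubit_FRIO_dual_feasible
    (mv nv : Fin 3 → ℝ)
    (hmm : ∑ i, mv i * mv i = 1) (hnn : ∑ i, nv i * nv i = 1)
    (hmn : ∑ i, mv i * nv i = 0)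
    (q : ℝ) (hq0 : 0 < q) (hq1 : q < 1)
    (gv : Fin 3 → ℝ) (hgv : gv = (-((1 - Real.sqrt (1 - q ^ 2)) / q)) • nv)
    (G M₁ M₂ : Matrix (Fin 2) (Fin 2) ℂ)
    (hG : G = ((1 + Real.sqrt (1 - q ^ 2)) / (2 * Real.sqrt (1 - q ^ 2)) : ℝ) •
        ((1 : Matrix (Fin 2) (Fin 2) ℂ) + pauli gv))
    (hM₁ : M₁ = (2⁻¹ : ℝ) • ((1 : Matrix (Fin 2) (Fin 2) ℂ) + pauli mv))
    (hM₂ : M₂ = (2⁻¹ : ℝ) • ((1 : Matrix (Fin 2) (Fin 2) ℂ) - pauli mv))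
    (w : ℝ) (hw : w = (1 + Real.sqrt ((1 - q) / (1 + q))) / 2) :
    (G - M₁).PosSemidef ∧ (G - M₂).PosSemidef ∧
    (G - w • (1 : Matrix (Fin 2) (Fin 2) ℂ)).PosSemidef := by
  set s := Real.sqrt (1 - q ^ 2) with hsdef
  set t := Real.sqrt ((1 - q) / (1 + q)) with htdef
  have h1q : (0:ℝ) < 1 - q ^ 2 := by nlinarith
  have hs0 : 0 < s := Real.sqrt_pos.mpr h1q
  have hs2 : s ^ 2 = 1 - q ^ 2 := Real.sq_sqrt h1q.le
  have ht0 : 0 ≤ t := Real.sqrt_nonneg _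
  have hts : t * s = 1 - q := by
    rw [hsdef, htdef, ← Real.sqrt_mul (div_nonneg (by linarith) (by linarith))]
    rw [show (1 - q) / (1 + q) * (1 - q ^ 2) = (1 - q) ^ 2 by field_simp; ring]
    exact Real.sqrt_sq (by linarith)
  set g₀ : ℝ := (1 + s) / (2 * s) with hg₀
  -- sum of squares identity
  have h1 := hnn; have h2 := hmm; have h3 := hmn
  simp only [Fin.sum_univ_three] at h1 h2 h3
  have hsum : ∀ c1 c2 : ℝ, (c1 * nv 0 + c2 * mv 0) ^ 2 + (c1 * nv 1 + c2 * mv 1) ^ 2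
      + (c1 * nv 2 + c2 * mv 2) ^ 2 = c1 ^ 2 + c2 ^ 2 := by
    intro c1 c2
    linear_combination c1 ^ 2 * h1 + c2 ^ 2 * h2 + 2 * c1 * c2 * h3
  set c1 : ℝ := g₀ * (-((1 - s) / q)) with hc1
  have hc1v : c1 = -(q / (2 * s)) := by
    rw [hc1, hg₀]
    field_simp
    nlinarith [hs2]
  refine ⟨?_, ?_, ?_⟩
  · have he : G - M₁ = (g₀ - 2⁻¹ : ℝ) • (1 : Matrix (Fin 2) (Fin 2) ℂ)
        + pauli (fun i => c1 * nv i + (-2⁻¹) * mv i) := by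
      rw [hG, hM₁, hgv, hc1]
      simp only [pauli, Pi.smul_apply, smul_eq_mul]
      module
    rw [he]
    apply pauli_psd
    · rw [hg₀]; rw [div_sub' (by positivity)]
      apply div_nonneg _ (by positivity)
      nlinarith
    · rw [hsum c1 (-2⁻¹), hc1v, hg₀]
      have hsne : s ≠ 0 := hs0.ne'
      apply le_of_eq
      field_simp
      ring_nf
      linear_combination hs2
  · have he : G - M₂ = (g₀ - 2⁻¹ : ℝ) • (1 : Matrix (Fin 2) (Fin 2) ℂ)
        + pauli (fun i => c1 * nv i + (2⁻¹ : ℝ) * mv i) := by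
      rw [hG, hM₂, hgv, hc1]
      simp only [pauli, Pi.smul_apply, smul_eq_mul]
      module
    rw [he]
    apply pauli_psd
    · rw [hg₀]; rw [div_sub' (by positivity)]
      apply div_nonneg _ (by positivity)
      nlinarith
    · rw [hsum c1 (2⁻¹), hc1v, hg₀]
      have hsne : s ≠ 0 := hs0.ne'
      apply le_of_eq
      field_simp
      ring_nf
      linear_combination hs2
  · have he : G - w • (1 : Matrix (Fin 2) (Fin 2) ℂ) = (g₀ - w : ℝ) • (1 : Matrix (Fin 2) (Fin 2) ℂ)
        + pauli (fun i => c1 * nv i + (0 : ℝ) * mv i) := by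
      rw [hG, hgv, hc1]
      simp only [pauli, Pi.smul_apply, smul_eq_mul]
      module
    rw [he]
    have hgw : g₀ - w = q / (2 * s) := by
      rw [hg₀, hw]
      field_simp
      nlinarith [hts]
    apply pauli_psd
    · rw [hgw]; positivity
    · rw [hsum c1 0, hc1v, hgw]
      ring_nf
      nlinarith [sq_nonneg q, hs0]
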